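/- If τ : ℤ → K^× satisfies a Somos-8 relation α₁ τ_{n+8} τ_n + α₂ τ_{n+7} τ_{n+1} + α₃ τ_{n+6} τ_{n+2} + α₄ τ_{n+5} τ_{n+3} + α₅ τ_{n+4}² = 0 for all n with fixed α₁,…,α₅ not all zero, then for every n the 5×5 matrix with rows (τ_{n+4+k} τ_{n-4+k}, τ_{n+3+k} τ_{n-3+k}, τ_{n+2+k} τ_{n-2+k}, τ_{n+1+k} τ_{n-1+k}, τ_{n+k}²) for k = 0,1,2,3,4 has determinant zero. Conversely, if this determinant vanishes for all n and the ratios of appropriate 4×4 minors are independent of n, then τ satisfies a Somos-8 relation with constant coefficients. -/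

import Mathlib

/-- The `5 × 5` matrix of equation (5.4) of the paper, with rows
`(τ_{n+4+k} τ_{n-4+k}, τ_{n+3+k} τ_{n-3+k}, τ_{n+2+k} τ_{n-2+k}, τ_{n+1+k} τ_{n-1+k}, τ_{n+k}²)`
for `k = 0, 1, 2, 3, 4`. -/
noncomputable def somos8Mat {K : Type*} [Field K] (τ : ℤ → K) (n : ℤ) :
    Matrix (Fin 5) (Fin 5) K :=
  Matrix.of fun k j =>
    τ (n + (k : ℤ) + (4 - ((j : ℕ) : ℤ))) * τ (n + (k : ℤ) - (4 - ((j : ℕ) : ℤ)))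

/-- The `4 × 4` minor `D̂_{j,n}` formed from the first four rows of `somos8Mat τ n`
with column `j` deleted. -/
noncomputable def somos8Minor {K : Type*} [Field K] (τ : ℤ → K) (j : Fin 5) (n : ℤ) : K :=
  (Matrix.of fun k l : Fin 4 => somos8Mat τ n k.castSucc (j.succAbove l)).det

/-- Laplace expansion of the `5 × 5` determinant along the last row. -/
lemma somos8_det_expand {K : Type*} [Field K] (τ : ℤ → K) (n : ℤ) :
    (somos8Mat τ n).det = ∑ j : Fin 5, (-1) ^ (j : ℕ) * somos8Mat τ n 4 j * somos8Minor τ j n := by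
  rw [Matrix.det_succ_row _ (Fin.last 4)]
  refine Finset.sum_congr rfl fun j _ => ?_
  rw [Fin.succAbove_last]
  congr 1
  · congr 1
    simp [Fin.last]
    simp [pow_add, show ((4:Fin 5):ℕ) = 4 from rfl]
    norm_num

theorem somos8_det_criterion {K : Type*} [Field K] (τ : ℤ → K) (hτ : ∀ n, τ n ≠ 0) :
    (∀ α₁ α₂ α₃ α₄ α₅ : K,
      ¬(α₁ = 0 ∧ α₂ = 0 ∧ α₃ = 0 ∧ α₄ = 0 ∧ α₅ = 0) →
      (∀ n : ℤ, α₁ * (τ (n + 8) * τ n) + α₂ * (τ (n + 7) * τ (n + 1))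
        + α₃ * (τ (n + 6) * τ (n + 2)) + α₄ * (τ (n + 5) * τ (n + 3))
        + α₅ * (τ (n + 4)) ^ 2 = 0) →
      ∀ n : ℤ, (somos8Mat τ n).det = 0) ∧
    ((∀ n : ℤ, (somos8Mat τ n).det = 0) →
      (∀ n : ℤ, somos8Minor τ 0 n ≠ 0) →
      (∀ j : Fin 5, ∀ n : ℤ,
        somos8Minor τ j n * somos8Minor τ 0 (n + 1)
          = somos8Minor τ j (n + 1) * somos8Minor τ 0 n) →
      ∃ α : Fin 5 → K, α ≠ 0 ∧
        ∀ n : ℤ, α 0 * (τ (n + 8) * τ n) + α 1 * (τ (n + 7) * τ (n + 1))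
          + α 2 * (τ (n + 6) * τ (n + 2)) + α 3 * (τ (n + 5) * τ (n + 3))
          + α 4 * (τ (n + 4)) ^ 2 = 0) := by
  constructor
  · intro α₁ α₂ α₃ α₄ α₅ hne hrel n
    rw [← Matrix.exists_mulVec_eq_zero_iff]
    refine ⟨![α₁, α₂, α₃, α₄, α₅], ?_, ?_⟩
    · intro h
      exact hne ⟨congrFun h 0, congrFun h 1, congrFun h 2, congrFun h 3, congrFun h 4⟩
    · funext k
      have h := hrel (n + (k : ℤ) - 4)
      simp only [Matrix.mulVec, dotProduct, Fin.sum_univ_five, somos8Mat, Matrix.of_apply]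
      norm_num [show ((3:Fin 5):ℕ) = 3 from rfl, show ((4:Fin 5):ℕ) = 4 from rfl,
        show ![α₁, α₂, α₃, α₄, α₅] 2 = α₃ from rfl, show ![α₁, α₂, α₃, α₄, α₅] 3 = α₄ from rfl,
        show ![α₁, α₂, α₃, α₄, α₅] 4 = α₅ from rfl]
      ring_nf
      ring_nf at h
      linear_combination h
  · intro hdet hmin hrat
    have hB0 := hmin 0
    -- constancy of the minor ratios
    have hconst : ∀ j : Fin 5, ∀ m : ℤ,
        somos8Minor τ j m * somos8Minor τ 0 0 = somos8Minor τ j 0 * somos8Minor τ 0 m := by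
      intro j m
      induction m using Int.induction_on with
      | zero => ring
      | succ i ih =>
        have h1 := hrat j i
        apply mul_left_cancel₀ (hmin i)
        linear_combination somos8Minor τ 0 ((i:ℤ) + 1) * ih - somos8Minor τ 0 0 * h1
      | pred i ih =>
        have h1 := hrat j (-(i:ℤ) - 1)
        rw [show (-(i:ℤ) - 1) + 1 = -(i:ℤ) by ring] at h1
        apply mul_left_cancel₀ (hmin (-(i:ℤ)))
        linear_combination somos8Minor τ 0 0 * h1 + somos8Minor τ 0 (-(i:ℤ) - 1) * ih
    refine ⟨fun j => (-1) ^ (j : ℕ) * (somos8Minor τ j 0 / somos8Minor τ 0 0), ?_, ?_⟩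
    · intro h
      have h0 := congrFun h 0
      simp [div_self hB0] at h0
    · intro n
      have h := hdet n
      rw [somos8_det_expand] at h
      simp only [Fin.sum_univ_five, somos8Mat, Matrix.of_apply] at h
      norm_num [show ((3:Fin 5):ℕ) = 3 from rfl, show ((4:Fin 5):ℕ) = 4 from rfl] at h
      have hc0 := hconst 0 n
      have hc1 := hconst 1 n
      have hc2 := hconst 2 n
      have hc3 := hconst 3 n
      have hc4 := hconst 4 n
      simp only [show ((0:Fin 5):ℕ) = 0 from rfl, show ((1:Fin 5):ℕ) = 1 from rfl,
        show ((2:Fin 5):ℕ) = 2 from rfl, show ((3:Fin 5):ℕ) = 3 from rfl,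
        show ((4:Fin 5):ℕ) = 4 from rfl]
      field_simp
      apply mul_right_cancel₀ (hmin n)
      rw [mul_zero, zero_mul]
      linear_combination (norm := ring_nf) somos8Minor τ 0 0 * h
        - (τ (n+8) * τ n) * hc0 + (τ (n+7) * τ (n+1)) * hc1
        - (τ (n+6) * τ (n+2)) * hc2 + (τ (n+5) * τ (n+3)) * hc3
        - (τ (n+4))^2 * hc4
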